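/- Let P₁, P₂, P₃ be elements of a complex Banach algebra satisfying the second-order condition [P₁,P₂] + [P₁,P₃] + [P₂,P₃] = 0, set 𝓛 = P₁ + P₂ + P₃ and E(t) = exp(tP₁)·exp(tP₂)·exp(tP₃) − exp(t𝓛). Then for every real t ≥ 0, E(t) = ∫₀ᵗ exp((t−τ)𝓛)·( ∫₀^τ exp((τ−η)P₁)·( ∫₀^η exp(ξP₁)·[P₁,[P₂,P₃]]·exp(−ξP₁) dξ )·exp(ηP₁) dη )·exp(τP₂)·exp(τP₃) dτ + ∫₀ᵗ exp((t−τ)𝓛)·( ∫₀^τ exp(τP₁)·( ∫₀^η exp(ξP₂)·[P₂,[P₂,P₃]]·exp(−ξP₂) dξ ) dη )·exp(τP₂)·exp(τP₃) dτ. -/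

import Mathlib

open NormedSpace

section helpers
variable {𝒜 : Type*} [NormedRing 𝒜] [NormedAlgebra ℝ 𝒜] [CompleteSpace 𝒜]

private noncomputable instance ratAlg : NormedAlgebra ℚ 𝒜 := .restrictScalars ℚ ℝ 𝒜

private lemma expc (A : 𝒜) : Continuous fun s : ℝ => exp (s • A) :=
  exp_continuous.comp (continuous_id.smul continuous_const)

private lemma expcn (A : 𝒜) : Continuous fun s : ℝ => exp ((-s) • A) :=
  (expc A).comp continuous_neg

private lemma exp_cancel (A : 𝒜) (s : ℝ) : exp (s • A) * exp ((-s) • A) = 1 := by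
  rw [← exp_add_of_commute (((Commute.refl A).smul_left s).smul_right (-s))]
  simp

private lemma exp_cancel' (A : 𝒜) (s : ℝ) : exp ((-s) • A) * exp (s • A) = 1 := by
  rw [← exp_add_of_commute (((Commute.refl A).smul_left (-s)).smul_right s)]
  simp

private lemma exp_split (A : 𝒜) (a b : ℝ) :
    exp ((a - b) • A) = exp (a • A) * exp ((-b) • A) := by
  rw [← exp_add_of_commute (((Commute.refl A).smul_left a).smul_right (-b))]
  congr 1
  rw [sub_smul, neg_smul, sub_eq_add_neg]

private lemma hasDerivAt_exp_neg (A : 𝒜) (s : ℝ) :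
    HasDerivAt (fun u : ℝ => exp ((-u) • A)) (-(exp ((-s) • A) * A)) s := by
  have h := (hasDerivAt_exp_smul_const (𝕂 := ℝ) A (-s)).scomp s (hasDerivAt_neg s)
  simpa [Function.comp_def] using h

private lemma hasDerivAt_conj (A B : 𝒜) (s : ℝ) :
    HasDerivAt (fun u : ℝ => exp (u • A) * B * exp ((-u) • A))
      (exp (s • A) * (A * B - B * A) * exp ((-s) • A)) s := by
  have hc : A * exp ((-s) • A) = exp ((-s) • A) * A :=
    (((Commute.refl A).smul_right (-s)).exp_right).eq
  have h := ((hasDerivAt_exp_smul_const (𝕂 := ℝ) A s).mul_const B).mul (hasDerivAt_exp_neg A s)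
  refine h.congr_deriv ?_
  symm
  rw [← hc]
  noncomm_ring

private lemma hasDerivAt_conj' (A B : 𝒜) (s : ℝ) :
    HasDerivAt (fun u : ℝ => exp ((-u) • A) * B * exp (u • A))
      (-(exp ((-s) • A) * (A * B - B * A) * exp (s • A))) s := by
  have hc : exp (s • A) * A = A * exp (s • A) :=
    (((Commute.refl A).smul_right s).exp_right).symm.eq
  have h := ((hasDerivAt_exp_neg A s).mul_const B).mul (hasDerivAt_exp_smul_const (𝕂 := ℝ) A s)
  refine h.congr_deriv ?_
  symm
  rw [hc]
  noncomm_ring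

private lemma inner_integral (A B : 𝒜) (η : ℝ) :
    (∫ ξ in (0:ℝ)..η, exp (ξ • A) * (A * B - B * A) * exp ((-ξ) • A))
      = exp (η • A) * B * exp ((-η) • A) - B := by
  rw [intervalIntegral.integral_eq_sub_of_hasDerivAt
    (f := fun u : ℝ => exp (u • A) * B * exp ((-u) • A))
    (fun ξ _ => hasDerivAt_conj A B ξ)
    ((((expc A).mul continuous_const).mul (expcn A)).intervalIntegrable 0 η)]
  simp

private lemma integral_const_mul' (c : 𝒜) {f : ℝ → 𝒜} {a b : ℝ}
    (hf : IntervalIntegrable f MeasureTheory.volume a b) :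
    (∫ x in a..b, c * f x) = c * ∫ x in a..b, f x := by
  simpa using (ContinuousLinearMap.mul ℝ 𝒜 c).intervalIntegral_comp_comm hf

private lemma mid_rw (A C : 𝒜) (τ η : ℝ) :
    exp ((τ - η) • A) * (exp (η • A) * C * exp ((-η) • A) - C) * exp (η • A)
      = exp (τ • A) * (C - exp ((-η) • A) * C * exp (η • A)) := by
  rw [exp_split]
  have key : exp ((-η) • A) * (exp (η • A) * C * exp ((-η) • A) - C) * exp (η • A)
      = C - exp ((-η) • A) * C * exp (η • A) := by
    have expand : exp ((-η) • A) * (exp (η • A) * C * exp ((-η) • A) - C) * exp (η • A)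
        = (exp ((-η) • A) * exp (η • A)) * C * (exp ((-η) • A) * exp (η • A))
          - exp ((-η) • A) * C * exp (η • A) := by noncomm_ring
    rw [expand, exp_cancel', one_mul, mul_one]
  calc exp (τ • A) * exp ((-η) • A) * (exp (η • A) * C * exp ((-η) • A) - C) * exp (η • A)
      = exp (τ • A) * (exp ((-η) • A) * (exp (η • A) * C * exp ((-η) • A) - C) * exp (η • A)) := by
        noncomm_ring
    _ = exp (τ • A) * (C - exp ((-η) • A) * C * exp (η • A)) := by rw [key]

end helpers

section main
variable {𝒜 : Type*} [NormedRing 𝒜] [NormedAlgebra ℝ 𝒜] [CompleteSpace 𝒜]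

private lemma middle_sum (P₁ P₂ P₃ : 𝒜)
    (hcond : (P₁ * P₂ - P₂ * P₁) + (P₁ * P₃ - P₃ * P₁) + (P₂ * P₃ - P₃ * P₂) = 0) (τ : ℝ) :
    (∫ η in (0:ℝ)..τ, ((P₂ * P₃ - P₃ * P₂)
        - exp ((-η) • P₁) * (P₂ * P₃ - P₃ * P₂) * exp (η • P₁)))
    + (∫ η in (0:ℝ)..τ, (exp (η • P₂) * (P₂ * P₃ - P₃ * P₂) * exp ((-η) • P₂)
        - (P₂ * P₃ - P₃ * P₂)))
    = P₂ - exp ((-τ) • P₁) * P₂ * exp (τ • P₁)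
      + (exp (τ • P₂) * P₃ * exp ((-τ) • P₂)
        - exp ((-τ) • P₁) * P₃ * exp (τ • P₁)) := by
  have hc1 : Continuous fun η : ℝ => (P₂ * P₃ - P₃ * P₂)
      - exp ((-η) • P₁) * (P₂ * P₃ - P₃ * P₂) * exp (η • P₁) :=
    continuous_const.sub (((expcn P₁).mul continuous_const).mul (expc P₁))
  have hc2 : Continuous fun η : ℝ => exp (η • P₂) * (P₂ * P₃ - P₃ * P₂) * exp ((-η) • P₂)
      - (P₂ * P₃ - P₃ * P₂) :=
    (((expc P₂).mul continuous_const).mul (expcn P₂)).sub continuous_const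
  rw [← intervalIntegral.integral_add (hc1.intervalIntegrable 0 τ) (hc2.intervalIntegrable 0 τ)]
  have hsum : (P₁ * P₂ - P₂ * P₁) + (P₁ * P₃ - P₃ * P₁) = -(P₂ * P₃ - P₃ * P₂) :=
    eq_neg_of_add_eq_zero_left hcond
  have hC2 : (P₂ * P₃ - P₃ * P₂) = -((P₁ * P₂ - P₂ * P₁) + (P₁ * P₃ - P₃ * P₁)) := by
    rw [hsum, neg_neg]
  have hderiv : ∀ η : ℝ, HasDerivAt
      (fun u : ℝ => P₂ - exp ((-u) • P₁) * P₂ * exp (u • P₁)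
        + (exp (u • P₂) * P₃ * exp ((-u) • P₂) - exp ((-u) • P₁) * P₃ * exp (u • P₁)))
      (((P₂ * P₃ - P₃ * P₂)
          - exp ((-η) • P₁) * (P₂ * P₃ - P₃ * P₂) * exp (η • P₁))
        + (exp (η • P₂) * (P₂ * P₃ - P₃ * P₂) * exp ((-η) • P₂)
          - (P₂ * P₃ - P₃ * P₂))) η := by
    intro η
    have h := ((hasDerivAt_const η P₂).sub (hasDerivAt_conj' P₁ P₂ η)).add
      ((hasDerivAt_conj P₂ P₃ η).sub (hasDerivAt_conj' P₁ P₃ η))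
    refine h.congr_deriv ?_
    symm
    rw [hC2]
    noncomm_ring
  have hcont : Continuous fun η : ℝ =>
      ((P₂ * P₃ - P₃ * P₂) - exp ((-η) • P₁) * (P₂ * P₃ - P₃ * P₂) * exp (η • P₁))
      + (exp (η • P₂) * (P₂ * P₃ - P₃ * P₂) * exp ((-η) • P₂) - (P₂ * P₃ - P₃ * P₂)) :=
    hc1.add hc2
  rw [intervalIntegral.integral_eq_sub_of_hasDerivAt (fun η _ => hderiv η)
    (hcont.intervalIntegrable 0 τ)]
  simp

end main

section main2
variable {𝒜 : Type*} [NormedRing 𝒜] [NormedAlgebra ℝ 𝒜] [CompleteSpace 𝒜]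

private lemma top_hasDerivAt (P₁ P₂ P₃ 𝓛 : 𝒜) (h𝓛 : 𝓛 = P₁ + P₂ + P₃) (τ : ℝ) :
    HasDerivAt
      (fun u : ℝ => exp ((-u) • 𝓛) * exp (u • P₁) * exp (u • P₂) * exp (u • P₃))
      (exp ((-τ) • 𝓛) * exp (τ • P₁)
        * (P₂ - exp ((-τ) • P₁) * P₂ * exp (τ • P₁)
           + (exp (τ • P₂) * P₃ * exp ((-τ) • P₂)
             - exp ((-τ) • P₁) * P₃ * exp (τ • P₁)))
        * exp (τ • P₂) * exp (τ • P₃)) τ := by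
  subst h𝓛
  have h := (((hasDerivAt_exp_neg (P₁ + P₂ + P₃) τ).mul
      (hasDerivAt_exp_smul_const' (𝕂 := ℝ) P₁ τ)).mul
      (hasDerivAt_exp_smul_const' (𝕂 := ℝ) P₂ τ)).mul
      (hasDerivAt_exp_smul_const' (𝕂 := ℝ) P₃ τ)
  refine h.congr_deriv ?_
  symm
  have h11 : exp (τ • P₁) * exp ((-τ) • P₁) = 1 := exp_cancel P₁ τ
  have h22 : exp ((-τ) • P₂) * exp (τ • P₂) = 1 := exp_cancel' P₂ τ
  calc exp ((-τ) • (P₁ + P₂ + P₃)) * exp (τ • P₁)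
        * (P₂ - exp ((-τ) • P₁) * P₂ * exp (τ • P₁)
           + (exp (τ • P₂) * P₃ * exp ((-τ) • P₂)
             - exp ((-τ) • P₁) * P₃ * exp (τ • P₁)))
        * exp (τ • P₂) * exp (τ • P₃)
      = exp ((-τ) • (P₁ + P₂ + P₃)) * (exp (τ • P₁) * (P₂ * (exp (τ • P₂) * exp (τ • P₃))))
        - exp ((-τ) • (P₁ + P₂ + P₃)) * ((exp (τ • P₁) * exp ((-τ) • P₁))
            * (P₂ * (exp (τ • P₁) * (exp (τ • P₂) * exp (τ • P₃)))))
        + exp ((-τ) • (P₁ + P₂ + P₃)) * (exp (τ • P₁) * (exp (τ • P₂)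
            * (P₃ * ((exp ((-τ) • P₂) * exp (τ • P₂)) * exp (τ • P₃)))))
        - exp ((-τ) • (P₁ + P₂ + P₃)) * ((exp (τ • P₁) * exp ((-τ) • P₁))
            * (P₃ * (exp (τ • P₁) * (exp (τ • P₂) * exp (τ • P₃))))) := by
        noncomm_ring
    _ = -(exp ((-τ) • (P₁ + P₂ + P₃)) * (P₁ + P₂ + P₃)) * exp (τ • P₁)
          * exp (τ • P₂) * exp (τ • P₃)
        + exp ((-τ) • (P₁ + P₂ + P₃)) * (P₁ * exp (τ • P₁))
          * exp (τ • P₂) * exp (τ • P₃)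
        + exp ((-τ) • (P₁ + P₂ + P₃)) * exp (τ • P₁)
          * (P₂ * exp (τ • P₂)) * exp (τ • P₃)
        + exp ((-τ) • (P₁ + P₂ + P₃)) * exp (τ • P₁)
          * exp (τ • P₂) * (P₃ * exp (τ • P₃)) := by
        rw [h11, h22]
        noncomm_ring
    _ = _ := by simp only [Pi.mul_apply]; noncomm_ring

end main2

section main3
variable {𝒜 : Type*} [NormedRing 𝒜] [NormedAlgebra ℝ 𝒜] [CompleteSpace 𝒜]

private lemma Kcont (P₁ P₂ P₃ : 𝒜) : Continuous fun τ : ℝ =>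
    P₂ - exp ((-τ) • P₁) * P₂ * exp (τ • P₁)
      + (exp (τ • P₂) * P₃ * exp ((-τ) • P₂)
        - exp ((-τ) • P₁) * P₃ * exp (τ • P₁)) :=
  (continuous_const.sub (((expcn P₁).mul continuous_const).mul (expc P₁))).add
    ((((expc P₂).mul continuous_const).mul (expcn P₂)).sub
      (((expcn P₁).mul continuous_const).mul (expc P₁)))

private lemma top_integral (P₁ P₂ P₃ 𝓛 : 𝒜) (h𝓛 : 𝓛 = P₁ + P₂ + P₃) (t : ℝ) :
    (∫ τ in (0:ℝ)..t, exp ((-τ) • 𝓛) * exp (τ • P₁)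
        * (P₂ - exp ((-τ) • P₁) * P₂ * exp (τ • P₁)
           + (exp (τ • P₂) * P₃ * exp ((-τ) • P₂)
             - exp ((-τ) • P₁) * P₃ * exp (τ • P₁)))
        * exp (τ • P₂) * exp (τ • P₃))
    = exp ((-t) • 𝓛) * exp (t • P₁) * exp (t • P₂) * exp (t • P₃) - 1 := by
  have hcont : Continuous fun τ : ℝ => exp ((-τ) • 𝓛) * exp (τ • P₁)
      * (P₂ - exp ((-τ) • P₁) * P₂ * exp (τ • P₁)
         + (exp (τ • P₂) * P₃ * exp ((-τ) • P₂)
           - exp ((-τ) • P₁) * P₃ * exp (τ • P₁)))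
      * exp (τ • P₂) * exp (τ • P₃) :=
    ((((expcn 𝓛).mul (expc P₁)).mul (Kcont P₁ P₂ P₃)).mul (expc P₂)).mul (expc P₃)
  rw [intervalIntegral.integral_eq_sub_of_hasDerivAt
    (fun τ _ => top_hasDerivAt P₁ P₂ P₃ 𝓛 h𝓛 τ) (hcont.intervalIntegrable 0 t)]
  simp

end main3

/-- Theorem 3.1, error formula: For `P₁, P₂, P₃` in a complex Banach algebra
satisfying `[P₁,P₂] + [P₁,P₃] + [P₂,P₃] = 0`, with `𝓛 = P₁ + P₂ + P₃` and
`E(t) = exp(tP₁)exp(tP₂)exp(tP₃) − exp(t𝓛)`, for every `t ≥ 0`: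
`E(t) = ∫₀ᵗ exp((t−τ)𝓛)·(∫₀^τ exp((τ−η)P₁)·(∫₀^η exp(ξP₁)[P₁,[P₂,P₃]]exp(−ξP₁) dξ)·exp(ηP₁) dη)·exp(τP₂)exp(τP₃) dτ
      + ∫₀ᵗ exp((t−τ)𝓛)·(∫₀^τ exp(τP₁)·(∫₀^η exp(ξP₂)[P₂,[P₂,P₃]]exp(−ξP₂) dξ) dη)·exp(τP₂)exp(τP₃) dτ`. -/
theorem splitting_error_formula {𝒜 : Type*} [NormedRing 𝒜] [NormedAlgebra ℂ 𝒜]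
    [CompleteSpace 𝒜] (P₁ P₂ P₃ : 𝒜) (𝓛 : 𝒜) (h𝓛 : 𝓛 = P₁ + P₂ + P₃)
    (hcond : (P₁ * P₂ - P₂ * P₁) + (P₁ * P₃ - P₃ * P₁) + (P₂ * P₃ - P₃ * P₂) = 0) :
    ∀ t : ℝ, 0 ≤ t →
      exp ((t : ℂ) • P₁) * exp ((t : ℂ) • P₂) * exp ((t : ℂ) • P₃) - exp ((t : ℂ) • 𝓛)
      = (∫ τ in (0 : ℝ)..t, exp (((t - τ : ℝ) : ℂ) • 𝓛)
            * (∫ η in (0 : ℝ)..τ, exp (((τ - η : ℝ) : ℂ) • P₁)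
                * (∫ ξ in (0 : ℝ)..η, exp ((ξ : ℂ) • P₁)
                    * (P₁ * (P₂ * P₃ - P₃ * P₂) - (P₂ * P₃ - P₃ * P₂) * P₁)
                    * exp (-((ξ : ℂ) • P₁)))
                * exp ((η : ℂ) • P₁))
            * exp ((τ : ℂ) • P₂) * exp ((τ : ℂ) • P₃))
        + ∫ τ in (0 : ℝ)..t, exp (((t - τ : ℝ) : ℂ) • 𝓛)
            * (∫ η in (0 : ℝ)..τ, exp ((τ : ℂ) • P₁)
                * ∫ ξ in (0 : ℝ)..η, exp ((ξ : ℂ) • P₂)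
                    * (P₂ * (P₂ * P₃ - P₃ * P₂) - (P₂ * P₃ - P₃ * P₂) * P₂)
                    * exp (-((ξ : ℂ) • P₂)))
            * exp ((τ : ℂ) • P₂) * exp ((τ : ℂ) • P₃) := by
  intro t _
  simp only [Complex.coe_smul, ← neg_smul]
  -- continuity facts
  have hc1 : Continuous fun η : ℝ => (P₂ * P₃ - P₃ * P₂)
      - exp ((-η) • P₁) * (P₂ * P₃ - P₃ * P₂) * exp (η • P₁) :=
    continuous_const.sub (((expcn P₁).mul continuous_const).mul (expc P₁))
  have hc2 : Continuous fun η : ℝ => exp (η • P₂) * (P₂ * P₃ - P₃ * P₂) * exp ((-η) • P₂)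
      - (P₂ * P₃ - P₃ * P₂) :=
    (((expc P₂).mul continuous_const).mul (expcn P₂)).sub continuous_const
  have hJ1 : Continuous fun τ : ℝ => ∫ η in (0:ℝ)..τ, ((P₂ * P₃ - P₃ * P₂)
      - exp ((-η) • P₁) * (P₂ * P₃ - P₃ * P₂) * exp (η • P₁)) :=
    intervalIntegral.continuous_primitive (fun a b => hc1.intervalIntegrable a b) 0
  have hJ2 : Continuous fun τ : ℝ => ∫ η in (0:ℝ)..τ, (exp (η • P₂)
      * (P₂ * P₃ - P₃ * P₂) * exp ((-η) • P₂) - (P₂ * P₃ - P₃ * P₂)) :=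
    intervalIntegral.continuous_primitive (fun a b => hc2.intervalIntegrable a b) 0
  have hu1 : IntervalIntegrable (fun τ : ℝ => exp ((-τ) • 𝓛) * exp (τ • P₁)
      * (∫ η in (0:ℝ)..τ, ((P₂ * P₃ - P₃ * P₂)
          - exp ((-η) • P₁) * (P₂ * P₃ - P₃ * P₂) * exp (η • P₁)))
      * exp (τ • P₂) * exp (τ • P₃)) MeasureTheory.volume 0 t :=
    (((((expcn 𝓛).mul (expc P₁)).mul hJ1).mul (expc P₂)).mul (expc P₃)).intervalIntegrable 0 t
  have hu2 : IntervalIntegrable (fun τ : ℝ => exp ((-τ) • 𝓛) * exp (τ • P₁)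
      * (∫ η in (0:ℝ)..τ, (exp (η • P₂) * (P₂ * P₃ - P₃ * P₂) * exp ((-η) • P₂)
          - (P₂ * P₃ - P₃ * P₂)))
      * exp (τ • P₂) * exp (τ • P₃)) MeasureTheory.volume 0 t :=
    (((((expcn 𝓛).mul (expc P₁)).mul hJ2).mul (expc P₂)).mul (expc P₃)).intervalIntegrable 0 t
  -- pointwise identification of the two outer integrands
  have hptw1 : ∀ τ : ℝ, exp ((t - τ) • 𝓛)
      * (∫ η in (0:ℝ)..τ, exp ((τ - η) • P₁)
          * (∫ ξ in (0:ℝ)..η, exp (ξ • P₁)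
              * (P₁ * (P₂ * P₃ - P₃ * P₂) - (P₂ * P₃ - P₃ * P₂) * P₁)
              * exp ((-ξ) • P₁))
          * exp (η • P₁))
      * exp (τ • P₂) * exp (τ • P₃)
      = exp (t • 𝓛) * (exp ((-τ) • 𝓛) * exp (τ • P₁)
          * (∫ η in (0:ℝ)..τ, ((P₂ * P₃ - P₃ * P₂)
              - exp ((-η) • P₁) * (P₂ * P₃ - P₃ * P₂) * exp (η • P₁)))
          * exp (τ • P₂) * exp (τ • P₃)) := by
    intro τ
    simp only [inner_integral P₁ (P₂ * P₃ - P₃ * P₂), mid_rw P₁ (P₂ * P₃ - P₃ * P₂)]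
    rw [integral_const_mul' (exp (τ • P₁)) (hc1.intervalIntegrable 0 τ), exp_split 𝓛 t τ]
    noncomm_ring
  have hptw2 : ∀ τ : ℝ, exp ((t - τ) • 𝓛)
      * (∫ η in (0:ℝ)..τ, exp (τ • P₁)
          * ∫ ξ in (0:ℝ)..η, exp (ξ • P₂)
              * (P₂ * (P₂ * P₃ - P₃ * P₂) - (P₂ * P₃ - P₃ * P₂) * P₂)
              * exp ((-ξ) • P₂))
      * exp (τ • P₂) * exp (τ • P₃)
      = exp (t • 𝓛) * (exp ((-τ) • 𝓛) * exp (τ • P₁)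
          * (∫ η in (0:ℝ)..τ, (exp (η • P₂) * (P₂ * P₃ - P₃ * P₂) * exp ((-η) • P₂)
              - (P₂ * P₃ - P₃ * P₂)))
          * exp (τ • P₂) * exp (τ • P₃)) := by
    intro τ
    simp only [inner_integral P₂ (P₂ * P₃ - P₃ * P₂)]
    rw [integral_const_mul' (exp (τ • P₁)) (hc2.intervalIntegrable 0 τ), exp_split 𝓛 t τ]
    noncomm_ring
  rw [intervalIntegral.integral_congr (g := fun τ : ℝ => exp (t • 𝓛)
        * (exp ((-τ) • 𝓛) * exp (τ • P₁)
          * (∫ η in (0:ℝ)..τ, ((P₂ * P₃ - P₃ * P₂)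
              - exp ((-η) • P₁) * (P₂ * P₃ - P₃ * P₂) * exp (η • P₁)))
          * exp (τ • P₂) * exp (τ • P₃))) (fun τ _ => hptw1 τ),
      intervalIntegral.integral_congr (g := fun τ : ℝ => exp (t • 𝓛)
        * (exp ((-τ) • 𝓛) * exp (τ • P₁)
          * (∫ η in (0:ℝ)..τ, (exp (η • P₂) * (P₂ * P₃ - P₃ * P₂) * exp ((-η) • P₂)
              - (P₂ * P₃ - P₃ * P₂)))
          * exp (τ • P₂) * exp (τ • P₃))) (fun τ _ => hptw2 τ),
      integral_const_mul' (exp (t • 𝓛)) hu1, integral_const_mul' (exp (t • 𝓛)) hu2,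
      ← mul_add, ← intervalIntegral.integral_add hu1 hu2]
  have hmerge : ∀ τ : ℝ, (exp ((-τ) • 𝓛) * exp (τ • P₁)
        * (∫ η in (0:ℝ)..τ, ((P₂ * P₃ - P₃ * P₂)
            - exp ((-η) • P₁) * (P₂ * P₃ - P₃ * P₂) * exp (η • P₁)))
        * exp (τ • P₂) * exp (τ • P₃))
      + (exp ((-τ) • 𝓛) * exp (τ • P₁)
        * (∫ η in (0:ℝ)..τ, (exp (η • P₂) * (P₂ * P₃ - P₃ * P₂) * exp ((-η) • P₂)
            - (P₂ * P₃ - P₃ * P₂)))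
        * exp (τ • P₂) * exp (τ • P₃))
      = exp ((-τ) • 𝓛) * exp (τ • P₁)
        * (P₂ - exp ((-τ) • P₁) * P₂ * exp (τ • P₁)
           + (exp (τ • P₂) * P₃ * exp ((-τ) • P₂)
             - exp ((-τ) • P₁) * P₃ * exp (τ • P₁)))
        * exp (τ • P₂) * exp (τ • P₃) := by
    intro τ
    rw [← middle_sum P₁ P₂ P₃ hcond τ]
    noncomm_ring
  rw [intervalIntegral.integral_congr (g := fun τ : ℝ => exp ((-τ) • 𝓛) * exp (τ • P₁)
        * (P₂ - exp ((-τ) • P₁) * P₂ * exp (τ • P₁)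
           + (exp (τ • P₂) * P₃ * exp ((-τ) • P₂)
             - exp ((-τ) • P₁) * P₃ * exp (τ • P₁)))
        * exp (τ • P₂) * exp (τ • P₃)) (fun τ _ => hmerge τ),
      top_integral P₁ P₂ P₃ 𝓛 h𝓛 t]
  rw [mul_sub, mul_one]
  simp only [← mul_assoc]
  rw [exp_cancel 𝓛 t, one_mul]
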